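/- Let d ≥ 1, let q > 1 and s = 1 − 1/q, and let μ be a Borel probability measure on [0,1]^d which is absolutely continuous with respect to Lebesgue measure λ^d with density h ∈ L^q(λ^d). Then for every x ∈ [0,1]^d and all ξ = (ξ_1,…,ξ_d), r = (r_1,…,r_d) ∈ [0,∞)^d: μ(R(x, ξ + r)) ≤ μ(R(x, ξ)) + 2d·‖h‖_q·(max_{1≤i≤d} r_i)^s and μ(R(x, ξ − r)) ≥ μ(R(x, ξ)) − 2d·‖h‖_q·(max_{1≤i≤d} r_i)^s, where ξ ± r is taken componentwise and ‖h‖_q := (∫_{[0,1]^d} |h|^q dλ^d)^{1/q}. -/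

import Mathlib

open MeasureTheory Filter Set Metric Topology
open scoped ENNReal NNReal

noncomputable section

/-- The unit cube `[0,1]^d`. -/
def unitCube (d : ℕ) : Set (Fin d → ℝ) := {x | ∀ i, x i ∈ Set.Icc (0 : ℝ) 1}

/-- The open hyperrectangle `R(x,s) = {z : |z_i - x_i| < s_i for all i}`. -/
def Rect {d : ℕ} (x s : Fin d → ℝ) : Set (Fin d → ℝ) := {z | ∀ i, |z i - x i| < s i}

/-- The hyperboloid `H(x,δ) = x + {z ∈ [-1,1]^d : |z_1 ⋯ z_d| < δ}`. -/
def Hyp {d : ℕ} (x : Fin d → ℝ) (δ : ℝ) : Set (Fin d → ℝ) :=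
  {z | (∀ i, |z i - x i| ≤ 1) ∧ |∏ i, (z i - x i)| < δ}

lemma unitCube_eq_pi (d : ℕ) : unitCube d = Set.pi Set.univ (fun _ : Fin d => Set.Icc (0:ℝ) 1) := by
  ext z
  constructor
  · intro hz i _; exact hz i
  · intro hz i; exact hz i (Set.mem_univ i)

lemma measurableSet_unitCube (d : ℕ) : MeasurableSet (unitCube d) := by
  rw [unitCube_eq_pi]
  exact MeasurableSet.univ_pi fun _ => measurableSet_Icc

lemma measurable_abs_sub {d : ℕ} (x : Fin d → ℝ) (i : Fin d) :
    Measurable fun z : Fin d → ℝ => |z i - x i| :=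
  ((measurable_pi_apply i).sub measurable_const).abs

lemma measurableSet_Rect {d : ℕ} (x s : Fin d → ℝ) : MeasurableSet (Rect x s) := by
  have hR : Rect x s = ⋂ i, {z : Fin d → ℝ | |z i - x i| < s i} := by
    ext z; simp [Rect]
  rw [hR]
  exact MeasurableSet.iInter fun i =>
    measurableSet_lt (measurable_abs_sub x i) measurable_const

/-- The slab in coordinate `i`. -/
def Slab {d : ℕ} (x : Fin d → ℝ) (i : Fin d) (a b : ℝ) : Set (Fin d → ℝ) :=
  {z | a ≤ |z i - x i| ∧ |z i - x i| < b}

lemma measurableSet_Slab {d : ℕ} (x : Fin d → ℝ) (i : Fin d) (a b : ℝ) :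
    MeasurableSet (Slab x i a b) := by
  have : Slab x i a b =
      {z : Fin d → ℝ | a ≤ |z i - x i|} ∩ {z : Fin d → ℝ | |z i - x i| < b} := by
    rfl
  rw [this]
  exact (measurableSet_le measurable_const (measurable_abs_sub x i)).inter
    (measurableSet_lt (measurable_abs_sub x i) measurable_const)

lemma rect_subset_union_slabs {d : ℕ} (x ξ' ξ'' : Fin d → ℝ) :
    Rect x ξ'' ⊆ Rect x ξ' ∪ ⋃ i, Slab x i (ξ' i) (ξ'' i) := by
  intro z hz
  by_cases hz' : z ∈ Rect x ξ'
  · exact Or.inl hz'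
  · right
    simp only [Rect, Set.mem_setOf_eq, not_forall, not_lt] at hz'
    obtain ⟨i, hi⟩ := hz'
    exact Set.mem_iUnion.2 ⟨i, hi, hz i⟩

lemma slab_volume {d : ℕ} (x : Fin d → ℝ) (i : Fin d) (a b R : ℝ) (hR : 0 ≤ R)
    (hba : b - a ≤ R) :
    volume (Slab x i a b ∩ unitCube d) ≤ ENNReal.ofReal (2 * R) := by
  set I : Set ℝ := Set.Ico (x i + a) (x i + b) ∪ Set.Ioc (x i - b) (x i - a) with hI
  have hsub : Slab x i a b ∩ unitCube d ⊆
      Set.pi Set.univ (fun j : Fin d => if j = i then I else Set.Icc (0:ℝ) 1) := by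
    rintro z ⟨⟨hza, hzb⟩, hzc⟩ j _
    by_cases hji : j = i
    · subst hji
      simp only [if_pos rfl, hI]
      rcases le_or_gt (x j) (z j) with hc | hc
      · left
        have habs : |z j - x j| = z j - x j := abs_of_nonneg (by linarith)
        rw [habs] at hza hzb
        constructor <;> [linarith; linarith]
      · right
        have habs : |z j - x j| = -(z j - x j) := abs_of_neg (by linarith)
        rw [habs] at hza hzb
        constructor <;> [linarith; linarith]
    · simp only [if_neg hji]
      exact hzc j
  refine le_trans (measure_mono hsub) ?_
  rw [volume_pi_pi]
  have hprod : (∏ j : Fin d, volume (if j = i then I else Set.Icc (0:ℝ) 1)) = volume I := by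
    rw [Finset.prod_eq_single i]
    · simp
    · intro j _ hji
      simp [if_neg hji, Real.volume_Icc]
    · simp
  rw [hprod]
  have h1 : volume I ≤ volume (Set.Ico (x i + a) (x i + b)) +
      volume (Set.Ioc (x i - b) (x i - a)) := measure_union_le _ _
  have h2 : volume (Set.Ico (x i + a) (x i + b)) = ENNReal.ofReal (b - a) := by
    rw [Real.volume_Ico]; congr 1; ring
  have h3 : volume (Set.Ioc (x i - b) (x i - a)) = ENNReal.ofReal (b - a) := by
    rw [Real.volume_Ioc]; congr 1; ring
  rw [h2, h3] at h1
  calc volume I ≤ ENNReal.ofReal (b - a) + ENNReal.ofReal (b - a) := h1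
    _ ≤ ENNReal.ofReal R + ENNReal.ofReal R :=
        add_le_add (ENNReal.ofReal_le_ofReal hba) (ENNReal.ofReal_le_ofReal hba)
    _ = ENNReal.ofReal (2 * R) := by
        rw [← ENNReal.ofReal_add hR hR]; congr 1; ring

lemma holder_bound (d : ℕ) (q : ℝ) (hq : 1 < q)
    (h : (Fin d → ℝ) → ℝ)
    (hLq : MemLp h (ENNReal.ofReal q) volume)
    (hsupp : ∀ x, x ∉ unitCube d → h x = 0)
    (A : Set (Fin d → ℝ)) (hA : MeasurableSet A) :
    ∫⁻ z in A, ENNReal.ofReal (h z) ≤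
      ENNReal.ofReal ((∫ y in unitCube d, |h y| ^ q) ^ (1 / q)) *
        volume (A ∩ unitCube d) ^ (1 - 1 / q) := by
  have hq0 : (0:ℝ) < q := lt_trans one_pos hq
  set q' : ℝ := q.conjExponent with hq'def
  have hpq : q.HolderConjugate q' := Real.HolderConjugate.conjExponent hq
  have hinv : 1 / q' = 1 - 1 / q := by
    have := hpq.inv_add_inv_eq_one
    rw [one_div, one_div]; linarith
  set B : Set (Fin d → ℝ) := A ∩ unitCube d with hB
  have hBmeas : MeasurableSet B := hA.inter (measurableSet_unitCube d)
  set f : (Fin d → ℝ) → ℝ≥0∞ := fun z => ENNReal.ofReal (h z) with hf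
  set g : (Fin d → ℝ) → ℝ≥0∞ := B.indicator (fun _ => (1:ℝ≥0∞)) with hg
  have hfm : AEMeasurable f volume :=
    ENNReal.measurable_ofReal.comp_aemeasurable hLq.aestronglyMeasurable.aemeasurable
  have hgm : Measurable g := measurable_const.indicator hBmeas
  -- step 1: the set-lintegral equals ∫⁻ (f * g)
  have hstep1 : ∫⁻ z in A, f z = ∫⁻ z, (f * g) z := by
    rw [← lintegral_indicator hA f]
    congr 1
    funext z
    by_cases hzA : z ∈ A
    · by_cases hzc : z ∈ unitCube d
      · have hzB : z ∈ B := ⟨hzA, hzc⟩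
        simp [Set.indicator_of_mem hzA, hg, Set.indicator_of_mem hzB]
      · have hzB : z ∉ B := fun hz => hzc hz.2
        simp [Set.indicator_of_mem hzA, hg, Set.indicator_of_notMem hzB, hf,
          hsupp z hzc]
    · have hzB : z ∉ B := fun hz => hzA hz.1
      simp [Set.indicator_of_notMem hzA, hg, Set.indicator_of_notMem hzB]
  -- step 2: Hölder
  have hholder := ENNReal.lintegral_mul_le_Lp_mul_Lq volume hpq hfm hgm.aemeasurable
  -- step 3: bound the Lq norm of f
  have hstep3 : (∫⁻ z, f z ^ q) ^ (1 / q) ≤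
      ENNReal.ofReal ((∫ y in unitCube d, |h y| ^ q) ^ (1 / q)) := by
    have hint : Integrable (fun z => |h z| ^ q) volume := by
      have := hLq.integrable_norm_rpow (by simp [hq0.ne', ENNReal.ofReal_eq_zero, hq0.not_ge])
        ENNReal.ofReal_ne_top
      simpa [Real.norm_eq_abs, ENNReal.toReal_ofReal hq0.le] using this
    have h1 : ∫⁻ z, f z ^ q ≤ ∫⁻ z, ENNReal.ofReal (|h z| ^ q) := by
      refine lintegral_mono fun z => ?_
      rw [← ENNReal.ofReal_rpow_of_nonneg (abs_nonneg _) hq0.le]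
      exact ENNReal.rpow_le_rpow (ENNReal.ofReal_le_ofReal (le_abs_self _)) hq0.le
    have h2 : ∫⁻ z, ENNReal.ofReal (|h z| ^ q) =
        ENNReal.ofReal (∫ z, |h z| ^ q) := by
      rw [← ofReal_integral_eq_lintegral_ofReal hint]
      exact Filter.Eventually.of_forall fun z => Real.rpow_nonneg (abs_nonneg _) q
    have h3 : (∫ z, |h z| ^ q) = ∫ y in unitCube d, |h y| ^ q := by
      symm
      apply setIntegral_eq_integral_of_forall_compl_eq_zero
      intro y hy
      rw [hsupp y hy, abs_zero, Real.zero_rpow hq0.ne']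
    have hnn : 0 ≤ ∫ y in unitCube d, |h y| ^ q :=
      setIntegral_nonneg (measurableSet_unitCube d)
        (fun y _ => Real.rpow_nonneg (abs_nonneg _) q)
    calc (∫⁻ z, f z ^ q) ^ (1 / q)
        ≤ (ENNReal.ofReal (∫ y in unitCube d, |h y| ^ q)) ^ (1 / q) := by
          apply ENNReal.rpow_le_rpow _ (by positivity)
          rw [← h3, ← h2]; exact h1
      _ = ENNReal.ofReal ((∫ y in unitCube d, |h y| ^ q) ^ (1 / q)) := by
          rw [ENNReal.ofReal_rpow_of_nonneg hnn (by positivity)]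
  -- step 4: compute the Lq' norm of g
  have hstep4 : (∫⁻ z, g z ^ q') ^ (1 / q') = volume B ^ (1 - 1 / q) := by
    have hgq : ∀ z, g z ^ q' = g z := by
      intro z
      by_cases hz : z ∈ B
      · simp [hg, Set.indicator_of_mem hz]
      · simp [hg, Set.indicator_of_notMem hz,
          ENNReal.zero_rpow_of_pos hpq.symm.pos]
    simp_rw [hgq]
    rw [hg, lintegral_indicator hBmeas, setLIntegral_one, hinv]
  rw [hstep1]
  calc ∫⁻ z, (f * g) z
      ≤ (∫⁻ z, f z ^ q) ^ (1 / q) * (∫⁻ z, g z ^ q') ^ (1 / q') := hholder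
    _ ≤ ENNReal.ofReal ((∫ y in unitCube d, |h y| ^ q) ^ (1 / q)) *
          volume (A ∩ unitCube d) ^ (1 - 1 / q) := by
        rw [hstep4]; exact mul_le_mul' hstep3 le_rfl

lemma core_bound (d : ℕ) (q : ℝ) (hq : 1 < q)
    (h : (Fin d → ℝ) → ℝ)
    (hLq : MemLp h (ENNReal.ofReal q) volume)
    (hsupp : ∀ x, x ∉ unitCube d → h x = 0)
    (x ξ' ξ'' : Fin d → ℝ) (R : ℝ) (hR : 0 ≤ R) (hle : ∀ i, ξ'' i - ξ' i ≤ R) :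
    (volume.withDensity fun z => ENNReal.ofReal (h z)) (Rect x ξ'') ≤
      (volume.withDensity fun z => ENNReal.ofReal (h z)) (Rect x ξ') +
        (d : ℝ≥0∞) * ENNReal.ofReal ((∫ y in unitCube d, |h y| ^ q) ^ (1 / q)) *
          ENNReal.ofReal (2 * R) ^ (1 - 1 / q) := by
  set ν := volume.withDensity fun z : Fin d → ℝ => ENNReal.ofReal (h z) with hν
  set C : ℝ≥0∞ := ENNReal.ofReal ((∫ y in unitCube d, |h y| ^ q) ^ (1 / q)) *
    ENNReal.ofReal (2 * R) ^ (1 - 1 / q) with hC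
  have hslab : ∀ i, ν (Slab x i (ξ' i) (ξ'' i)) ≤ C := by
    intro i
    rw [hν, withDensity_apply _ (measurableSet_Slab x i _ _)]
    refine le_trans (holder_bound d q hq h hLq hsupp _ (measurableSet_Slab x i _ _)) ?_
    refine mul_le_mul' le_rfl (ENNReal.rpow_le_rpow ?_ (by
      have : 1 / q < 1 := by
        rw [div_lt_one (lt_trans one_pos hq)]; exact hq
      linarith))
    exact slab_volume x i (ξ' i) (ξ'' i) R hR (hle i)
  calc ν (Rect x ξ'')
      ≤ ν (Rect x ξ' ∪ ⋃ i, Slab x i (ξ' i) (ξ'' i)) :=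
        measure_mono (rect_subset_union_slabs x ξ' ξ'')
    _ ≤ ν (Rect x ξ') + ν (⋃ i, Slab x i (ξ' i) (ξ'' i)) := measure_union_le _ _
    _ ≤ ν (Rect x ξ') + ∑ i, ν (Slab x i (ξ' i) (ξ'' i)) := by
        gcongr
        exact (measure_iUnion_le _).trans (by rw [tsum_fintype])
    _ ≤ ν (Rect x ξ') + ∑ _i : Fin d, C := by
        gcongr with i
        exact hslab i
    _ = ν (Rect x ξ') + (d : ℝ≥0∞) * C := by
        rw [Finset.sum_const, Finset.card_univ, Fintype.card_fin, nsmul_eq_mul]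
    _ = ν (Rect x ξ') + (d : ℝ≥0∞) *
          ENNReal.ofReal ((∫ y in unitCube d, |h y| ^ q) ^ (1 / q)) *
          ENNReal.ofReal (2 * R) ^ (1 - 1 / q) := by rw [hC, mul_assoc]

theorem statement7 (d : ℕ) (hd : 1 ≤ d) (q : ℝ) (hq : 1 < q)
    (h : (Fin d → ℝ) → ℝ)
    (hLq : MemLp h (ENNReal.ofReal q) volume)
    (hsupp : ∀ x, x ∉ unitCube d → h x = 0)
    (μ : Measure (Fin d → ℝ))
    (hdens : μ = volume.withDensity fun x => ENNReal.ofReal (h x))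
    (hprob : IsProbabilityMeasure μ)
    (x : Fin d → ℝ) (hx : x ∈ unitCube d)
    (ξ r : Fin d → ℝ) (hξ : ∀ i, 0 ≤ ξ i) (hr : ∀ i, 0 ≤ r i) :
    (μ (Rect x (ξ + r))).toReal ≤
        (μ (Rect x ξ)).toReal +
          2 * d * ((∫ y in unitCube d, |h y| ^ q) ^ (1 / q)) * (⨆ i, r i) ^ (1 - 1 / q) ∧
      (μ (Rect x ξ)).toReal -
          2 * d * ((∫ y in unitCube d, |h y| ^ q) ^ (1 / q)) * (⨆ i, r i) ^ (1 - 1 / q) ≤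
        (μ (Rect x (ξ - r))).toReal := by
  haveI : IsProbabilityMeasure μ := hprob
  have hq0 : (0:ℝ) < q := lt_trans one_pos hq
  haveI : Nonempty (Fin d) := ⟨⟨0, hd⟩⟩
  set R : ℝ := ⨆ i, r i with hRdef
  have hbdd : BddAbove (Set.range r) := Set.Finite.bddAbove (Set.finite_range r)
  have hriR : ∀ i, r i ≤ R := fun i => le_ciSup hbdd i
  have hR : 0 ≤ R := le_trans (hr (Classical.arbitrary _)) (hriR _)
  set M : ℝ := (∫ y in unitCube d, |h y| ^ q) ^ (1 / q) with hMdef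
  have hM : 0 ≤ M := by
    apply Real.rpow_nonneg
    exact setIntegral_nonneg (measurableSet_unitCube d)
      (fun y _ => Real.rpow_nonneg (abs_nonneg _) q)
  set s : ℝ := 1 - 1 / q with hsdef
  have hs0 : 0 ≤ s := by
    have : 1 / q < 1 := by rw [div_lt_one hq0]; exact hq
    rw [hsdef]; linarith
  have hs1 : s ≤ 1 := by
    have : 0 < 1 / q := by positivity
    rw [hsdef]; linarith
  set C : ℝ≥0∞ := (d : ℝ≥0∞) * ENNReal.ofReal M * ENNReal.ofReal (2 * R) ^ s with hCdef
  have hCfin : C ≠ ∞ := by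
    rw [hCdef]
    exact ENNReal.mul_ne_top (ENNReal.mul_ne_top (ENNReal.natCast_ne_top d)
      ENNReal.ofReal_ne_top) (ENNReal.rpow_ne_top_of_nonneg hs0 ENNReal.ofReal_ne_top)
  have hCtoReal : C.toReal ≤ 2 * d * M * R ^ s := by
    have h1 : C.toReal = d * M * (2 * R) ^ s := by
      rw [hCdef, ENNReal.toReal_mul, ENNReal.toReal_mul, ENNReal.toReal_natCast,
        ENNReal.toReal_ofReal hM, ← ENNReal.toReal_rpow,
        ENNReal.toReal_ofReal (by positivity)]
    rw [h1]
    have h2 : (2 * R) ^ s = 2 ^ s * R ^ s := Real.mul_rpow (by norm_num) hR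
    have h3 : (2:ℝ) ^ s ≤ 2 := by
      calc (2:ℝ) ^ s ≤ 2 ^ (1:ℝ) :=
            Real.rpow_le_rpow_of_exponent_le (by norm_num) hs1
        _ = 2 := Real.rpow_one 2
    have h4 : 0 ≤ R ^ s := Real.rpow_nonneg hR s
    calc (d:ℝ) * M * (2 * R) ^ s = (d:ℝ) * M * (2 ^ s * R ^ s) := by rw [h2]
      _ ≤ (d:ℝ) * M * (2 * R ^ s) := by
          apply mul_le_mul_of_nonneg_left _ (by positivity)
          exact mul_le_mul_of_nonneg_right h3 h4
      _ = 2 * d * M * R ^ s := by ring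
  have key : ∀ ξ' ξ'' : Fin d → ℝ, (∀ i, ξ'' i - ξ' i ≤ R) →
      (μ (Rect x ξ'')).toReal ≤ (μ (Rect x ξ')).toReal + 2 * d * M * R ^ s := by
    intro ξ' ξ'' hle
    have hcore := core_bound d q hq h hLq hsupp x ξ' ξ'' R hR hle
    rw [← hdens] at hcore
    rw [mul_assoc] at hcore
    have hfin : μ (Rect x ξ') + C ≠ ∞ :=
      ENNReal.add_ne_top.2 ⟨measure_ne_top μ _, hCfin⟩
    have h5 : (μ (Rect x ξ'')).toReal ≤ (μ (Rect x ξ') + C).toReal := by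
      apply ENNReal.toReal_mono hfin
      rw [hCdef, mul_assoc]
      exact hcore
    rw [ENNReal.toReal_add (measure_ne_top μ _) hCfin] at h5
    calc (μ (Rect x ξ'')).toReal ≤ (μ (Rect x ξ')).toReal + C.toReal := h5
      _ ≤ (μ (Rect x ξ')).toReal + 2 * d * M * R ^ s := by linarith
  constructor
  · apply key
    intro i
    simp only [Pi.add_apply]
    linarith [hriR i]
  · have := key (ξ - r) ξ (fun i => by simp only [Pi.sub_apply]; linarith [hriR i])
    linarith
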